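/- The function R(T,ρ) = (r₀/2)(α+ρ₀-T-ρ)^{4/3} - (3/10)(α+ρ₀-T-ρ)^{5/3} + (r₀/2)(α-ρ₀-T+ρ)^{4/3} + (3/10)(α-ρ₀-T+ρ)^{5/3} satisfies the wave equation R_{,TT} - R_{,ρρ} = 0, and on the hypersurface ρ = ρ₀ satisfies R = r₀(α-T)^{4/3} and R_{,ρ} = (α-T)^{2/3}. -/

import Mathlib

open Real

noncomputable section

/-- Partial derivative with respect to the first coordinate `T`. -/
def pdT (f : ℝ × ℝ → ℝ) (p : ℝ × ℝ) : ℝ := fderiv ℝ f p (1, 0)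

/-- Partial derivative with respect to the second coordinate `ρ`. -/
def pdρ (f : ℝ × ℝ → ℝ) (p : ℝ × ℝ) : ℝ := fderiv ℝ f p (0, 1)

private lemma aff_hasFDerivAt (c a b : ℝ) (p : ℝ × ℝ) :
    HasFDerivAt (fun q : ℝ × ℝ => c + a * q.1 + b * q.2)
      (a • ContinuousLinearMap.fst ℝ ℝ ℝ + b • ContinuousLinearMap.snd ℝ ℝ ℝ) p := by
  have h1 : HasFDerivAt (fun q : ℝ × ℝ => q.1) (ContinuousLinearMap.fst ℝ ℝ ℝ) p :=
    hasFDerivAt_fst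
  have h2 : HasFDerivAt (fun q : ℝ × ℝ => q.2) (ContinuousLinearMap.snd ℝ ℝ ℝ) p :=
    hasFDerivAt_snd
  have := ((hasFDerivAt_const c p).add (h1.const_mul a)).add (h2.const_mul b)
  rw [zero_add] at this
  exact this

private lemma term_hasFDerivAt (k c a b e : ℝ) (p : ℝ × ℝ) (h : 0 < c + a * p.1 + b * p.2) :
    HasFDerivAt (fun q : ℝ × ℝ => k * (c + a * q.1 + b * q.2) ^ e)
      ((k * (e * (c + a * p.1 + b * p.2) ^ (e - 1))) •
        (a • ContinuousLinearMap.fst ℝ ℝ ℝ + b • ContinuousLinearMap.snd ℝ ℝ ℝ)) p := by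
  have := ((aff_hasFDerivAt c a b p).rpow_const (p := e) (Or.inl h.ne')).const_mul k
  simpa [smul_smul, smul_add, mul_assoc] using this

private lemma uterm (k c e : ℝ) (p : ℝ × ℝ) (h : 0 < c - p.1 - p.2) :
    HasFDerivAt (fun q : ℝ × ℝ => k * (c - q.1 - q.2) ^ e)
      ((k * (e * (c - p.1 - p.2) ^ (e - 1))) •
        ((-1 : ℝ) • ContinuousLinearMap.fst ℝ ℝ ℝ + (-1 : ℝ) • ContinuousLinearMap.snd ℝ ℝ ℝ)) p := by
  have hb : ∀ x y : ℝ, c + (-1) * x + (-1) * y = c - x - y := by intros; ring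
  have h' : 0 < c + (-1) * p.1 + (-1) * p.2 := by rw [hb]; exact h
  have := term_hasFDerivAt k c (-1) (-1) e p h'
  simp only [hb] at this
  exact this

private lemma vterm (k c e : ℝ) (p : ℝ × ℝ) (h : 0 < c - p.1 + p.2) :
    HasFDerivAt (fun q : ℝ × ℝ => k * (c - q.1 + q.2) ^ e)
      ((k * (e * (c - p.1 + p.2) ^ (e - 1))) •
        ((-1 : ℝ) • ContinuousLinearMap.fst ℝ ℝ ℝ + (1 : ℝ) • ContinuousLinearMap.snd ℝ ℝ ℝ)) p := by
  have hb : ∀ x y : ℝ, c + (-1) * x + 1 * y = c - x + y := by intros; ring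
  have h' : 0 < c + (-1) * p.1 + 1 * p.2 := by rw [hb]; exact h
  have := term_hasFDerivAt k c (-1) 1 e p h'
  simp only [hb] at this
  exact this

private lemma master_pdT (c₁ c₂ k₁ k₂ k₃ k₄ e₁ e₂ e₃ e₄ : ℝ) (p : ℝ × ℝ)
    (hu : 0 < c₁ - p.1 - p.2) (hv : 0 < c₂ - p.1 + p.2) :
    pdT (fun q : ℝ × ℝ =>
        k₁ * (c₁ - q.1 - q.2) ^ e₁ + k₂ * (c₁ - q.1 - q.2) ^ e₂
          + k₃ * (c₂ - q.1 + q.2) ^ e₃ + k₄ * (c₂ - q.1 + q.2) ^ e₄) p =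
      -(k₁ * e₁ * (c₁ - p.1 - p.2) ^ (e₁ - 1)) - k₂ * e₂ * (c₁ - p.1 - p.2) ^ (e₂ - 1)
        - k₃ * e₃ * (c₂ - p.1 + p.2) ^ (e₃ - 1) - k₄ * e₄ * (c₂ - p.1 + p.2) ^ (e₄ - 1) := by
  have h := (((uterm k₁ c₁ e₁ p hu).add (uterm k₂ c₁ e₂ p hu)).add
      (vterm k₃ c₂ e₃ p hv)).add (vterm k₄ c₂ e₄ p hv)
  have h' := HasFDerivAt.fderiv (f := fun q : ℝ × ℝ =>
        k₁ * (c₁ - q.1 - q.2) ^ e₁ + k₂ * (c₁ - q.1 - q.2) ^ e₂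
          + k₃ * (c₂ - q.1 + q.2) ^ e₃ + k₄ * (c₂ - q.1 + q.2) ^ e₄) h
  simp only [pdT, h']
  simp [ContinuousLinearMap.add_apply, ContinuousLinearMap.smul_apply, smul_eq_mul]
  ring

private lemma master_pdρ (c₁ c₂ k₁ k₂ k₃ k₄ e₁ e₂ e₃ e₄ : ℝ) (p : ℝ × ℝ)
    (hu : 0 < c₁ - p.1 - p.2) (hv : 0 < c₂ - p.1 + p.2) :
    pdρ (fun q : ℝ × ℝ =>
        k₁ * (c₁ - q.1 - q.2) ^ e₁ + k₂ * (c₁ - q.1 - q.2) ^ e₂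
          + k₃ * (c₂ - q.1 + q.2) ^ e₃ + k₄ * (c₂ - q.1 + q.2) ^ e₄) p =
      -(k₁ * e₁ * (c₁ - p.1 - p.2) ^ (e₁ - 1)) - k₂ * e₂ * (c₁ - p.1 - p.2) ^ (e₂ - 1)
        + k₃ * e₃ * (c₂ - p.1 + p.2) ^ (e₃ - 1) + k₄ * e₄ * (c₂ - p.1 + p.2) ^ (e₄ - 1) := by
  have h := (((uterm k₁ c₁ e₁ p hu).add (uterm k₂ c₁ e₂ p hu)).add
      (vterm k₃ c₂ e₃ p hv)).add (vterm k₄ c₂ e₄ p hv)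
  have h' := HasFDerivAt.fderiv (f := fun q : ℝ × ℝ =>
        k₁ * (c₁ - q.1 - q.2) ^ e₁ + k₂ * (c₁ - q.1 - q.2) ^ e₂
          + k₃ * (c₂ - q.1 + q.2) ^ e₃ + k₄ * (c₂ - q.1 + q.2) ^ e₄) h
  simp only [pdρ, h']
  simp [ContinuousLinearMap.add_apply, ContinuousLinearMap.smul_apply, smul_eq_mul]
  ring

/-- The FLRW exterior areal function
`R(T,ρ) = (r₀/2)(α+ρ₀-T-ρ)^{4/3} - (3/10)(α+ρ₀-T-ρ)^{5/3}
  + (r₀/2)(α-ρ₀-T+ρ)^{4/3} + (3/10)(α-ρ₀-T+ρ)^{5/3}`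
satisfies the wave equation `R_{,TT} - R_{,ρρ} = 0` on the domain where
`α+ρ₀-T-ρ > 0` and `α-ρ₀-T+ρ > 0`, and on the hypersurface `ρ = ρ₀` it
satisfies `R = r₀(α-T)^{4/3}` and `R_{,ρ} = (α-T)^{2/3}`. -/
theorem flrw_exterior_areal_function (α ρ₀ r₀ : ℝ) :
    let R : ℝ × ℝ → ℝ := fun p =>
      r₀ / 2 * (α + ρ₀ - p.1 - p.2) ^ ((4 : ℝ) / 3)
        - 3 / 10 * (α + ρ₀ - p.1 - p.2) ^ ((5 : ℝ) / 3)
        + r₀ / 2 * (α - ρ₀ - p.1 + p.2) ^ ((4 : ℝ) / 3)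
        + 3 / 10 * (α - ρ₀ - p.1 + p.2) ^ ((5 : ℝ) / 3)
    (∀ p : ℝ × ℝ, 0 < α + ρ₀ - p.1 - p.2 → 0 < α - ρ₀ - p.1 + p.2 →
        pdT (pdT R) p - pdρ (pdρ R) p = 0) ∧
    (∀ T : ℝ, T < α →
        R (T, ρ₀) = r₀ * (α - T) ^ ((4 : ℝ) / 3) ∧
        pdρ R (T, ρ₀) = (α - T) ^ ((2 : ℝ) / 3)) := by
  intro R
  have hReq : R = fun q : ℝ × ℝ =>
      r₀ / 2 * (α + ρ₀ - q.1 - q.2) ^ ((4 : ℝ) / 3)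
        + -(3 / 10) * (α + ρ₀ - q.1 - q.2) ^ ((5 : ℝ) / 3)
        + r₀ / 2 * (α - ρ₀ - q.1 + q.2) ^ ((4 : ℝ) / 3)
        + 3 / 10 * (α - ρ₀ - q.1 + q.2) ^ ((5 : ℝ) / 3) := by
    funext q
    show r₀ / 2 * (α + ρ₀ - q.1 - q.2) ^ ((4 : ℝ) / 3)
        - 3 / 10 * (α + ρ₀ - q.1 - q.2) ^ ((5 : ℝ) / 3)
        + r₀ / 2 * (α - ρ₀ - q.1 + q.2) ^ ((4 : ℝ) / 3)
        + 3 / 10 * (α - ρ₀ - q.1 + q.2) ^ ((5 : ℝ) / 3) = _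
    ring
  constructor
  · intro p hu hv
    have hS : IsOpen {q : ℝ × ℝ | 0 < α + ρ₀ - q.1 - q.2 ∧ 0 < α - ρ₀ - q.1 + q.2} := by
      have h1 : IsOpen {q : ℝ × ℝ | 0 < α + ρ₀ - q.1 - q.2} :=
        isOpen_lt continuous_const (by fun_prop)
      have h2 : IsOpen {q : ℝ × ℝ | 0 < α - ρ₀ - q.1 + q.2} :=
        isOpen_lt continuous_const (by fun_prop)
      exact h1.inter h2
    have hp : p ∈ {q : ℝ × ℝ | 0 < α + ρ₀ - q.1 - q.2 ∧ 0 < α - ρ₀ - q.1 + q.2} := ⟨hu, hv⟩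
    have hevT : pdT R =ᶠ[nhds p] (fun q : ℝ × ℝ =>
        -(r₀ / 2 * ((4:ℝ)/3)) * (α + ρ₀ - q.1 - q.2) ^ ((4:ℝ)/3 - 1)
          + (3 / 10 * ((5:ℝ)/3)) * (α + ρ₀ - q.1 - q.2) ^ ((5:ℝ)/3 - 1)
          + -(r₀ / 2 * ((4:ℝ)/3)) * (α - ρ₀ - q.1 + q.2) ^ ((4:ℝ)/3 - 1)
          + -(3 / 10 * ((5:ℝ)/3)) * (α - ρ₀ - q.1 + q.2) ^ ((5:ℝ)/3 - 1)) := by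
      filter_upwards [hS.mem_nhds hp] with q hq
      rw [hReq, master_pdT (α + ρ₀) (α - ρ₀) (r₀ / 2) (-(3/10)) (r₀ / 2) (3/10)
        ((4:ℝ)/3) ((5:ℝ)/3) ((4:ℝ)/3) ((5:ℝ)/3) q hq.1 hq.2]
      ring
    have hevρ : pdρ R =ᶠ[nhds p] (fun q : ℝ × ℝ =>
        -(r₀ / 2 * ((4:ℝ)/3)) * (α + ρ₀ - q.1 - q.2) ^ ((4:ℝ)/3 - 1)
          + (3 / 10 * ((5:ℝ)/3)) * (α + ρ₀ - q.1 - q.2) ^ ((5:ℝ)/3 - 1)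
          + (r₀ / 2 * ((4:ℝ)/3)) * (α - ρ₀ - q.1 + q.2) ^ ((4:ℝ)/3 - 1)
          + (3 / 10 * ((5:ℝ)/3)) * (α - ρ₀ - q.1 + q.2) ^ ((5:ℝ)/3 - 1)) := by
      filter_upwards [hS.mem_nhds hp] with q hq
      rw [hReq, master_pdρ (α + ρ₀) (α - ρ₀) (r₀ / 2) (-(3/10)) (r₀ / 2) (3/10)
        ((4:ℝ)/3) ((5:ℝ)/3) ((4:ℝ)/3) ((5:ℝ)/3) q hq.1 hq.2]
      ring
    have h2T : pdT (pdT R) p = pdT (fun q : ℝ × ℝ =>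
        -(r₀ / 2 * ((4:ℝ)/3)) * (α + ρ₀ - q.1 - q.2) ^ ((4:ℝ)/3 - 1)
          + (3 / 10 * ((5:ℝ)/3)) * (α + ρ₀ - q.1 - q.2) ^ ((5:ℝ)/3 - 1)
          + -(r₀ / 2 * ((4:ℝ)/3)) * (α - ρ₀ - q.1 + q.2) ^ ((4:ℝ)/3 - 1)
          + -(3 / 10 * ((5:ℝ)/3)) * (α - ρ₀ - q.1 + q.2) ^ ((5:ℝ)/3 - 1)) p := by
      show fderiv ℝ (pdT R) p (1, 0) = _
      rw [hevT.fderiv_eq]; rfl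
    have h2ρ : pdρ (pdρ R) p = pdρ (fun q : ℝ × ℝ =>
        -(r₀ / 2 * ((4:ℝ)/3)) * (α + ρ₀ - q.1 - q.2) ^ ((4:ℝ)/3 - 1)
          + (3 / 10 * ((5:ℝ)/3)) * (α + ρ₀ - q.1 - q.2) ^ ((5:ℝ)/3 - 1)
          + (r₀ / 2 * ((4:ℝ)/3)) * (α - ρ₀ - q.1 + q.2) ^ ((4:ℝ)/3 - 1)
          + (3 / 10 * ((5:ℝ)/3)) * (α - ρ₀ - q.1 + q.2) ^ ((5:ℝ)/3 - 1)) p := by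
      show fderiv ℝ (pdρ R) p (0, 1) = _
      rw [hevρ.fderiv_eq]; rfl
    rw [h2T, h2ρ,
      master_pdT (α + ρ₀) (α - ρ₀) (-(r₀ / 2 * ((4:ℝ)/3))) (3 / 10 * ((5:ℝ)/3))
        (-(r₀ / 2 * ((4:ℝ)/3))) (-(3 / 10 * ((5:ℝ)/3)))
        ((4:ℝ)/3 - 1) ((5:ℝ)/3 - 1) ((4:ℝ)/3 - 1) ((5:ℝ)/3 - 1) p hu hv,
      master_pdρ (α + ρ₀) (α - ρ₀) (-(r₀ / 2 * ((4:ℝ)/3))) (3 / 10 * ((5:ℝ)/3))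
        (r₀ / 2 * ((4:ℝ)/3)) (3 / 10 * ((5:ℝ)/3))
        ((4:ℝ)/3 - 1) ((5:ℝ)/3 - 1) ((4:ℝ)/3 - 1) ((5:ℝ)/3 - 1) p hu hv]
    ring
  · intro T hT
    constructor
    · show r₀ / 2 * (α + ρ₀ - T - ρ₀) ^ ((4 : ℝ) / 3)
          - 3 / 10 * (α + ρ₀ - T - ρ₀) ^ ((5 : ℝ) / 3)
          + r₀ / 2 * (α - ρ₀ - T + ρ₀) ^ ((4 : ℝ) / 3)
          + 3 / 10 * (α - ρ₀ - T + ρ₀) ^ ((5 : ℝ) / 3) = r₀ * (α - T) ^ ((4 : ℝ) / 3)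
      rw [show α + ρ₀ - T - ρ₀ = α - T by ring, show α - ρ₀ - T + ρ₀ = α - T by ring]
      ring
    · rw [hReq, master_pdρ (α + ρ₀) (α - ρ₀) (r₀ / 2) (-(3/10)) (r₀ / 2) (3/10)
        ((4:ℝ)/3) ((5:ℝ)/3) ((4:ℝ)/3) ((5:ℝ)/3) (T, ρ₀)
        (show (0:ℝ) < α + ρ₀ - T - ρ₀ by linarith)
        (show (0:ℝ) < α - ρ₀ - T + ρ₀ by linarith)]
      have e1 : α + ρ₀ - ((T, ρ₀) : ℝ × ℝ).1 - ((T, ρ₀) : ℝ × ℝ).2 = α - T := by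
        show α + ρ₀ - T - ρ₀ = α - T; ring
      have e2 : α - ρ₀ - ((T, ρ₀) : ℝ × ℝ).1 + ((T, ρ₀) : ℝ × ℝ).2 = α - T := by
        show α - ρ₀ - T + ρ₀ = α - T; ring
      rw [e1, e2, show (5:ℝ)/3 - 1 = 2/3 by norm_num]
      ring

end
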